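/- arXiv:2409.10924 — 3 statements merged into one kernel-verified Lean document; each statement's English description precedes it below -/
import Mathlib

section
/- For any path P in G_{x,y} from v_{n,m} to v_{0,0}, the number of type-1 arcs plus the number of type-3 arcs in P equals d(x,y). -/
open Classical

variable {α : Type*}

/-- One single-symbol insertion or deletion step between sequences. -/
def EditStep (x y : List α) : Prop :=
  (∃ i a, y = x.insertIdx i a) ∨ (∃ i a, x = y.insertIdx i a)

/-- The indel distance: the minimum number of single-symbol insertions and
deletions transforming `x` into `y`. -/
noncomputable def indel (x y : List α) : ℕ :=
  sInf {n | ∃ f : ℕ → List α, f 0 = x ∧ f n = y ∧ ∀ i < n, EditStep (f i) (f (i + 1))}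

/-- The indel-distance table `h i j = d(x_[1..i], y_[1..j])`. -/
noncomputable def hh (x y : List α) (i j : ℕ) : ℕ :=
  indel (x.take i) (y.take j)

/-- Delete the (1-indexed) positions in the finite set `S` from `x`. -/
def delF (x : List α) (S : Finset ℕ) : List α :=
  (((List.range x.length).zip x).filter fun p => p.1 + 1 ∉ S).map Prod.snd

/-- Delete the (1-indexed) positions in the set `S` from `x`. -/
noncomputable def delS (x : List α) (S : Set ℕ) : List α :=
  (((List.range x.length).zip x).filter fun p => decide (p.1 + 1 ∉ S)).map Prod.snd

/-- Type-1 arc `(v_{i,j}, v_{i-1,j})` when `h i j = h (i-1) j + 1`. -/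
def IsArc1 (x y : List α) (p q : ℕ × ℕ) : Prop :=
  1 ≤ p.1 ∧ p.1 ≤ x.length ∧ p.2 ≤ y.length ∧ q = (p.1 - 1, p.2) ∧
    hh x y p.1 p.2 = hh x y (p.1 - 1) p.2 + 1

/-- Type-2 arc `(v_{i,j}, v_{i-1,j-1})` when `x_i = y_j`. -/
def IsArc2 (x y : List α) (p q : ℕ × ℕ) : Prop :=
  1 ≤ p.1 ∧ p.1 ≤ x.length ∧ 1 ≤ p.2 ∧ p.2 ≤ y.length ∧ q = (p.1 - 1, p.2 - 1) ∧
    x[p.1 - 1]? = y[p.2 - 1]?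

/-- Type-3 arc `(v_{i,j}, v_{i,j-1})` when `h i j = h i (j-1) + 1`. -/
def IsArc3 (x y : List α) (p q : ℕ × ℕ) : Prop :=
  p.1 ≤ x.length ∧ 1 ≤ p.2 ∧ p.2 ≤ y.length ∧ q = (p.1, p.2 - 1) ∧
    hh x y p.1 p.2 = hh x y p.1 (p.2 - 1) + 1

/-- Arcs of the digraph `G_{x,y}`. -/
def IsArc (x y : List α) (p q : ℕ × ℕ) : Prop :=
  IsArc1 x y p q ∨ IsArc2 x y p q ∨ IsArc3 x y p q

/-- `P` is a path in `G_{x,y}` from `v_{n,m}` to `v_{0,0}`. -/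
def IsPath (x y : List α) (P : List (ℕ × ℕ)) : Prop :=
  P.Chain' (IsArc x y) ∧ P.head? = some (x.length, y.length) ∧ P.getLast? = some (0, 0)

/-- Number of arcs of a path `P` satisfying the arc predicate `A`. -/
noncomputable def countArc (A : ℕ × ℕ → ℕ × ℕ → Prop) (P : List (ℕ × ℕ)) : ℕ :=
  (P.zip P.tail).countP fun pq => decide (A pq.1 pq.2)

/-- First indices of the type-1 arcs of `P`. -/
def fD (x y : List α) (P : List (ℕ × ℕ)) : Set ℕ :=
  { i | ∃ pq ∈ P.zip P.tail, IsArc1 x y pq.1 pq.2 ∧ pq.1.1 = i }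

/-- Second indices of the type-3 arcs of `P`. -/
def fI (x y : List α) (P : List (ℕ × ℕ)) : Set ℕ :=
  { j | ∃ pq ∈ P.zip P.tail, IsArc3 x y pq.1 pq.2 ∧ pq.1.2 = j }

/-- The single-deletion ball of `x`. -/
def delBall (x : List α) : Set (List α) :=
  { z | ∃ j, 1 ≤ j ∧ j ≤ x.length ∧ z = delF x {j} }

/-- `L^{(1)}(x)`: sequences (other than `x`) obtained from `x` by a single
insertion followed by a single deletion. -/
def L1 (x : List α) : Set (List α) :=
  { y | y ≠ x ∧ ∃ s, 1 ≤ s ∧ s ≤ x.length + 1 ∧ ∃ a : α, ∃ j, 1 ≤ j ∧ j ≤ x.length + 1 ∧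
      y = delF (x.insertIdx (s - 1) a) {j} }

/-- `x ∈ E_{n,q,t}`: any `t` deletion positions are uniquely detectable. -/
def Detects (x : List α) (t : ℕ) : Prop :=
  ∀ S S' : Finset ℕ, S ⊆ Finset.Icc 1 x.length → S' ⊆ Finset.Icc 1 x.length →
    S.card = t → S'.card = t → delF x S = delF x S' → S = S'

/-- `x` with the adjacent (1-indexed) symbols `x_i` and `x_{i+1}` swapped. -/
def swapAdj (x : List α) (i : ℕ) : List α :=
  x.take (i - 1) ++ ((x.drop (i - 1)).take 2).reverse ++ x.drop (i + 1)

/-- The partial order on paths of `G_{x,y}`. -/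
def PathLE (P Q : List (ℕ × ℕ)) : Prop :=
  ∀ j : ℕ, sInf {i | (i, j) ∈ P} ≤ sInf {i | (i, j) ∈ Q} ∧
    sSup {i | (i, j) ∈ P} ≤ sSup {i | (i, j) ∈ Q}

/-- The Wagner–Fischer matrix. -/
def wfH [DecidableEq α] (x y : List α) : ℕ → ℕ → ℕ
  | i, 0 => i
  | 0, j + 1 => j + 1
  | i + 1, j + 1 =>
      min (wfH x y (i + 1) j + 1)
        (min (wfH x y i (j + 1) + 1)
          (wfH x y i j + if x[i]? = y[j]? then 0 else 2))

namespace CntAux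

variable {α : Type*}

def Reach (n : ℕ) (x y : List α) : Prop :=
  ∃ f : ℕ → List α, f 0 = x ∧ f n = y ∧ ∀ i < n, EditStep (f i) (f (i + 1))

lemma sublist_insertIdx (l : List α) (i : ℕ) (a : α) : l.Sublist (l.insertIdx i a) := by
  induction l generalizing i with
  | nil => cases i <;> simp [List.insertIdx]
  | cons b t ih =>
    cases i with
    | zero => simpa using List.sublist_cons_self b (b :: t)
    | succ n => rw [List.insertIdx_succ_cons]; exact List.Sublist.cons₂ _ (ih n)

lemma editStep_cons (a : α) {x y : List α} (h : EditStep x y) : EditStep (a :: x) (a :: y) := by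
  rcases h with ⟨i, b, rfl⟩ | ⟨i, b, hy⟩
  · exact Or.inl ⟨i + 1, b, (List.insertIdx_succ_cons ..).symm⟩
  · exact Or.inr ⟨i + 1, b, by rw [List.insertIdx_succ_cons, ← hy]⟩

lemma reach_refl (x : List α) : Reach 0 x x :=
  ⟨fun _ => x, rfl, rfl, fun i hi => absurd hi (Nat.not_lt_zero i)⟩

lemma reach_step_head {x y z : List α} {n : ℕ} (h : EditStep x y) (hr : Reach n y z) :
    Reach (n + 1) x z := by
  obtain ⟨f, h0, hn, hs⟩ := hr
  refine ⟨fun i => if i = 0 then x else f (i - 1), by simp, by simp [hn], ?_⟩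
  intro i hi
  match i with
  | 0 => simpa [h0] using h
  | (j : ℕ) + 1 =>
    simpa using hs j (by omega)

lemma reach_cons (a : α) {x y : List α} {n : ℕ} (h : Reach n x y) : Reach n (a :: x) (a :: y) := by
  obtain ⟨f, h0, hn, hs⟩ := h
  exact ⟨fun i => a :: f i, by simp [h0], by simp [hn], fun i hi => editStep_cons a (hs i hi)⟩

lemma reach_symm {x y : List α} {n : ℕ} (h : Reach n x y) : Reach n y x := by
  obtain ⟨f, h0, hn, hs⟩ := h
  refine ⟨fun i => f (n - i), by simp [hn], by simp [h0], ?_⟩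
  intro i hi
  have h1 : n - i = (n - (i + 1)) + 1 := by omega
  have := hs (n - (i + 1)) (by omega)
  show EditStep (f (n - i)) (f (n - (i + 1)))
  rw [h1]
  rcases this with ⟨j, b, hb⟩ | ⟨j, b, hb⟩
  · exact Or.inr ⟨j, b, hb⟩
  · exact Or.inl ⟨j, b, hb⟩

lemma reach_trans {x y z : List α} {n m : ℕ} (h1 : Reach n x y) (h2 : Reach m y z) :
    Reach (n + m) x z := by
  obtain ⟨f, f0, fn, fs⟩ := h1
  obtain ⟨g, g0, gm, gs⟩ := h2
  refine ⟨fun i => if i < n then f i else g (i - n), ?_, ?_, ?_⟩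
  · rcases Nat.eq_zero_or_pos n with h | h
    · have hxy : x = y := by rw [← f0, ← fn, h]
      simp [h, g0, ← hxy]
    · simp [h, f0]
  · have : ¬ (n + m < n) := by omega
    simp [this, gm]
  · intro i hi
    by_cases hlt : i + 1 < n
    · simp [hlt, show i < n by omega]
      exact fs i (by omega)
    · by_cases heq : i + 1 = n
      · have hin : i < n := by omega
        simp [hlt, hin, show i + 1 - n = 0 by omega, g0, ← fn, ← heq]
        exact fs i (by omega)
      · have hin : ¬ i < n := by omega
        simp [hlt, hin, show i + 1 - n = (i - n) + 1 by omega]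
        exact gs (i - n) (by omega)

lemma reach_del {z x : List α} (h : z.Sublist x) : Reach (x.length - z.length) x z := by
  induction h with
  | slnil => exact reach_refl []
  | @cons l₁ l₂ a h ih =>
    have hle := h.length_le
    have harith : (a :: l₂).length - l₁.length = (l₂.length - l₁.length) + 1 := by
      simp; omega
    rw [harith]
    exact reach_step_head (Or.inr ⟨0, a, by rw [List.insertIdx_zero]⟩) ih
  | @cons_cons l₁ l₂ a h ih =>
    have harith : (a :: l₂).length - (a :: l₁).length = l₂.length - l₁.length := by simp
    rw [harith]
    exact reach_cons a ih

lemma reach_ins {z y : List α} (h : z.Sublist y) : Reach (y.length - z.length) z y :=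
  reach_symm (reach_del h)

lemma reach_total (x y : List α) : Reach (x.length + y.length) x y := by
  have h1 : Reach x.length x [] := by simpa using reach_del (List.nil_sublist x)
  have h2 : Reach y.length ([] : List α) y := by simpa using reach_ins (List.nil_sublist y)
  exact reach_trans h1 h2

lemma indel_le {x y : List α} {n : ℕ} (h : Reach n x y) : indel x y ≤ n :=
  Nat.sInf_le h

lemma reach_indel (x y : List α) : Reach (indel x y) x y := by
  have h : {n | Reach n x y}.Nonempty := ⟨_, reach_total x y⟩
  exact Nat.sInf_mem h

/-! ### Longest common subsequence -/

noncomputable def lcs (x y : List α) : ℕ :=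
  sSup {k | ∃ z : List α, z.Sublist x ∧ z.Sublist y ∧ z.length = k}

lemma lcs_set_nonempty (x y : List α) :
    {k | ∃ z : List α, z.Sublist x ∧ z.Sublist y ∧ z.length = k}.Nonempty :=
  ⟨0, [], List.nil_sublist x, List.nil_sublist y, rfl⟩

lemma lcs_bddAbove (x y : List α) :
    BddAbove {k | ∃ z : List α, z.Sublist x ∧ z.Sublist y ∧ z.length = k} :=
  ⟨x.length, fun _ ⟨z, h1, _, hl⟩ => hl ▸ h1.length_le⟩

lemma lcs_spec (x y : List α) :
    ∃ z : List α, z.Sublist x ∧ z.Sublist y ∧ z.length = lcs x y :=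
  Nat.sSup_mem (lcs_set_nonempty x y) (lcs_bddAbove x y)

lemma le_lcs {x y z : List α} (h1 : z.Sublist x) (h2 : z.Sublist y) : z.length ≤ lcs x y :=
  le_csSup (lcs_bddAbove x y) ⟨z, h1, h2, rfl⟩

lemma lcs_self (x : List α) : lcs x x = x.length := by
  refine le_antisymm (csSup_le (lcs_set_nonempty x x) ?_) (le_lcs (List.Sublist.refl x) (List.Sublist.refl x))
  rintro k ⟨z, h1, _, rfl⟩
  exact h1.length_le

lemma sublist_inter (v : List α) : ∀ z u : List α, z.Sublist v → u.Sublist v →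
    ∃ w : List α, w.Sublist z ∧ w.Sublist u ∧ z.length + u.length ≤ w.length + v.length := by
  induction v with
  | nil =>
    intro z u hz hu
    rw [List.sublist_nil] at hz hu
    subst hz; subst hu
    exact ⟨[], by simp⟩
  | cons c v ih =>
    intro z u hz hu
    rcases List.sublist_cons_iff.mp hz with hz' | ⟨z', rfl, hz'⟩ <;>
      rcases List.sublist_cons_iff.mp hu with hu' | ⟨u', rfl, hu'⟩
    · obtain ⟨w, h1, h2, h3⟩ := ih z u hz' hu'
      exact ⟨w, h1, h2, by simp; omega⟩
    · obtain ⟨w, h1, h2, h3⟩ := ih z u' hz' hu'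
      exact ⟨w, h1, h2.trans (List.sublist_cons_self c u'), by simp at h3 ⊢; omega⟩
    · obtain ⟨w, h1, h2, h3⟩ := ih z' u hz' hu'
      exact ⟨w, h1.trans (List.sublist_cons_self c z'), h2, by simp at h3 ⊢; omega⟩
    · obtain ⟨w, h1, h2, h3⟩ := ih z' u' hz' hu'
      exact ⟨c :: w, h1.cons₂ c, h2.cons₂ c, by simp at h3 ⊢; omega⟩

lemma lcs_mono {u v : List α} (h : u.Sublist v) (y : List α) : lcs u y ≤ lcs v y := by
  obtain ⟨z, h1, h2, hl⟩ := lcs_spec u y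
  rw [← hl]
  exact le_lcs (h1.trans h) h2

lemma lcs_le_add {u v : List α} (h : u.Sublist v) (y : List α) :
    lcs v y + u.length ≤ lcs u y + v.length := by
  obtain ⟨z, h1, h2, hl⟩ := lcs_spec v y
  obtain ⟨w, hw1, hw2, hw3⟩ := sublist_inter v z u h1 h
  have hwl : w.length ≤ lcs u y := le_lcs hw2 (hw1.trans h2)
  omega

lemma reach_lb (y : List α) : ∀ n : ℕ, ∀ x : List α, Reach n x y →
    x.length + y.length ≤ 2 * lcs x y + n := by
  intro n
  induction n with
  | zero =>
    rintro x ⟨f, h0, hn, -⟩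
    have : x = y := by rw [← h0, hn]
    subst this
    rw [lcs_self]
    omega
  | succ n ih =>
    rintro x ⟨f, h0, hn, hs⟩
    have h1 : Reach n (f 1) y := ⟨fun i => f (i + 1), rfl, hn, fun i hi => hs (i + 1) (by omega)⟩
    have hstep : EditStep x (f 1) := h0 ▸ hs 0 (by omega)
    have IH := ih (f 1) h1
    rcases hstep with ⟨i, b, hins⟩ | ⟨i, b, hins⟩
    · by_cases hi : i ≤ x.length
      · have hlen : (f 1).length = x.length + 1 := by
          rw [hins]; exact List.length_insertIdx_of_le_length hi b
        have hsub : x.Sublist (f 1) := hins ▸ sublist_insertIdx x i b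
        have hadd := lcs_le_add hsub y
        omega
      · have hfx : f 1 = x := by
          rw [hins, List.insertIdx_of_length_lt (l := x) (x := b) (i := i) (by omega)]
        rw [hfx] at IH
        omega
    · by_cases hi : i ≤ (f 1).length
      · have hlen : x.length = (f 1).length + 1 := by
          rw [hins]; exact List.length_insertIdx_of_le_length hi b
        have hsub : (f 1).Sublist x := hins ▸ sublist_insertIdx (f 1) i b
        have hmono := lcs_mono hsub y
        omega
      · have hfx : x = f 1 := by
          rw [hins, List.insertIdx_of_length_lt (l := f 1) (x := b) (i := i) (by omega)]
        rw [hfx]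
        omega

lemma indel_formula (x y : List α) : indel x y + 2 * lcs x y = x.length + y.length := by
  obtain ⟨z, hzx, hzy, hzl⟩ := lcs_spec x y
  have hub : indel x y ≤ (x.length - z.length) + (y.length - z.length) :=
    indel_le (reach_trans (reach_del hzx) (reach_ins hzy))
  have hlb := reach_lb y (indel x y) x (reach_indel x y)
  have h1 := hzx.length_le
  have h2 := hzy.length_le
  omega

lemma lcs_concat (a b : List α) (c : α) : lcs (a ++ [c]) (b ++ [c]) = lcs a b + 1 := by
  apply le_antisymm
  · obtain ⟨z, hz1, hz2, hzl⟩ := lcs_spec (a ++ [c]) (b ++ [c])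
    rw [← hzl]
    obtain ⟨z1, z2, rfl, h1a, h1c⟩ := List.sublist_append_iff.mp hz1
    obtain ⟨w1, w2, heq, h2b, h2c⟩ := List.sublist_append_iff.mp hz2
    have hz2len : z2.length ≤ 1 := by simpa using h1c.length_le
    have hw2len : w2.length ≤ 1 := by simpa using h2c.length_le
    have hlen : z1.length + z2.length = w1.length + w2.length := by
      have := congrArg List.length heq
      simpa using this
    by_cases hle : z1.length ≤ w1.length
    · have hpre : z1.IsPrefix w1 :=
        List.prefix_of_prefix_length_le (List.prefix_append z1 z2)
          (heq ▸ List.prefix_append w1 w2) hle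
      have : z1.length ≤ lcs a b := le_lcs h1a (hpre.sublist.trans h2b)
      simp; omega
    · have hpre : w1.IsPrefix z1 :=
        List.prefix_of_prefix_length_le (heq ▸ List.prefix_append w1 w2)
          (List.prefix_append z1 z2) (by omega)
      have : w1.length ≤ lcs a b := le_lcs (hpre.sublist.trans h1a) h2b
      simp; omega
  · obtain ⟨z, h1, h2, hl⟩ := lcs_spec a b
    have := le_lcs (h1.append (List.Sublist.refl [c])) (h2.append (List.Sublist.refl [c]))
    simpa [hl] using this

lemma indel_concat (a b : List α) (c : α) : indel (a ++ [c]) (b ++ [c]) = indel a b := by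
  have h1 := indel_formula (a ++ [c]) (b ++ [c])
  have h2 := indel_formula a b
  rw [lcs_concat] at h1
  simp at h1
  omega

/-! ### hh lemmas -/

lemma hh_zero (x y : List α) : hh x y 0 0 = 0 := by
  have : indel ([] : List α) [] ≤ 0 := indel_le (reach_refl [])
  simpa [hh] using this

lemma arc2_hh {x y : List α} {p q : ℕ × ℕ} (h : IsArc2 x y p q) :
    hh x y p.1 p.2 = hh x y (p.1 - 1) (p.2 - 1) := by
  obtain ⟨hi1, hi2, hj1, hj2, -, heq⟩ := h
  have hix : p.1 - 1 < x.length := by omega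
  have hjy : p.2 - 1 < y.length := by omega
  rw [List.getElem?_eq_getElem hix, List.getElem?_eq_getElem hjy] at heq
  set c := x[p.1 - 1]
  have hc : y[p.2 - 1] = c := by exact (Option.some_injective _ heq).symm
  have hx : x.take p.1 = x.take (p.1 - 1) ++ [c] := by
    conv_lhs => rw [show p.1 = (p.1 - 1) + 1 by omega]
    rw [List.take_succ, List.getElem?_eq_getElem hix]
    rfl
  have hy : y.take p.2 = y.take (p.2 - 1) ++ [c] := by
    conv_lhs => rw [show p.2 = (p.2 - 1) + 1 by omega]
    rw [List.take_succ, List.getElem?_eq_getElem hjy, hc]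
    rfl
  rw [hh, hx, hy, indel_concat]
  rfl

lemma path_count (x y : List α) : ∀ (P : List (ℕ × ℕ)) (p : ℕ × ℕ),
    List.Chain' (IsArc x y) (p :: P) → (p :: P).getLast? = some (0, 0) →
    countArc (IsArc1 x y) (p :: P) + countArc (IsArc3 x y) (p :: P) = hh x y p.1 p.2 := by
  intro P
  induction P with
  | nil =>
    intro p _ hlast
    simp at hlast
    subst hlast
    simp [countArc, hh_zero]
  | cons q P ih =>
    intro p hchain hlast
    have harc : IsArc x y p q := (List.isChain_cons_cons.mp hchain).1
    have hchain' : List.Chain' (IsArc x y) (q :: P) := (List.isChain_cons_cons.mp hchain).2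
    have hlast' : (q :: P).getLast? = some (0, 0) := by
      rwa [List.getLast?_cons_cons] at hlast
    have IH := ih q hchain' hlast'
    have hcnt : ∀ A : ℕ × ℕ → ℕ × ℕ → Prop, countArc A (p :: q :: P) =
        countArc A (q :: P) + if A p q then 1 else 0 := by
      intro A
      simp only [countArc, List.tail_cons, List.zip_cons_cons, List.countP_cons]
      congr 1
      by_cases h : A p q <;> simp [h]
    rw [hcnt, hcnt]
    rcases harc with h1 | h2 | h3
    · have hq : q = (p.1 - 1, p.2) := h1.2.2.2.1
      have hp1 : 1 ≤ p.1 := h1.1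
      have hnot3 : ¬ IsArc3 x y p q := by
        rintro ⟨-, -, -, hq3, -⟩
        rw [hq] at hq3
        have h' := congrArg Prod.fst hq3
        simp at h'
        omega
      have hhh : hh x y p.1 p.2 = hh x y q.1 q.2 + 1 := by
        rw [hq]; exact h1.2.2.2.2
      rw [if_pos h1, if_neg hnot3]
      omega
    · have hq : q = (p.1 - 1, p.2 - 1) := h2.2.2.2.2.1
      have hp1 : 1 ≤ p.1 := h2.1
      have hp2 : 1 ≤ p.2 := h2.2.2.1
      have hnot1 : ¬ IsArc1 x y p q := by
        rintro ⟨-, -, -, hq1, -⟩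
        rw [hq] at hq1
        have h' := congrArg Prod.snd hq1
        simp at h'
        omega
      have hnot3 : ¬ IsArc3 x y p q := by
        rintro ⟨-, -, -, hq3, -⟩
        rw [hq] at hq3
        have h' := congrArg Prod.fst hq3
        simp at h'
        omega
      have hhh : hh x y p.1 p.2 = hh x y q.1 q.2 := by
        rw [hq]; exact arc2_hh h2
      rw [if_neg hnot1, if_neg hnot3]
      omega
    · have hq : q = (p.1, p.2 - 1) := h3.2.2.2.1
      have hp2 : 1 ≤ p.2 := h3.2.1
      have hnot1 : ¬ IsArc1 x y p q := by
        rintro ⟨-, -, -, hq1, -⟩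
        rw [hq] at hq1
        have h' := congrArg Prod.snd hq1
        simp at h'
        omega
      have hhh : hh x y p.1 p.2 = hh x y q.1 q.2 + 1 := by
        rw [hq]; exact h3.2.2.2.2
      rw [if_neg hnot1, if_pos h3]
      omega

end CntAux
/-- the number of type-1 plus type-3 arcs of any path equals `d(x,y)`. -/
theorem count_type1_add_type3 {α : Type*} (x y : List α) (P : List (ℕ × ℕ))
    (hP : IsPath x y P) :
    countArc (IsArc1 x y) P + countArc (IsArc3 x y) P = indel x y := by
  obtain ⟨hchain, hhead, hlast⟩ := hP
  rcases P with _ | ⟨p, P'⟩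
  · simp at hhead
  · have hp : p = (x.length, y.length) := by simpa using hhead
    rw [CntAux.path_count x y P' p hchain hlast, hp]
    simp [hh, List.take_length]
end

section
/- For any path P in G_{x,y} from v_{n,m} to v_{0,0}, the number of type-1 arcs in P equals (d(x,y)+n−m)/2, the number of type-2 arcs equals (−d(x,y)+n+m)/2, and the number of type-3 arcs equals (d(x,y)−n+m)/2. In particular, these counts are independent of the choice of path P. -/
open Classical

variable {α : Type*}

open List

def EditPath (n : ℕ) (u v : List α) : Prop :=
  ∃ f : ℕ → List α, f 0 = u ∧ f n = v ∧ ∀ i < n, EditStep (f i) (f (i + 1))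

lemma indel_eq_sInf (u v : List α) : indel u v = sInf {n | EditPath n u v} := rfl

lemma EditPath.zero (u : List α) : EditPath 0 u u :=
  ⟨fun _ => u, rfl, rfl, fun i hi => absurd hi (Nat.not_lt_zero i)⟩

lemma EditStep.symm {u v : List α} (h : EditStep u v) : EditStep v u := Or.symm h

lemma EditPath.symm {n : ℕ} {u v : List α} (h : EditPath n u v) : EditPath n v u := by
  obtain ⟨f, h0, hn, hs⟩ := h
  refine ⟨fun i => f (n - i), by simp [hn], by simp [h0], fun i hi => ?_⟩
  show EditStep (f (n - i)) (f (n - (i + 1)))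
  have h1 : n - i = (n - (i + 1)) + 1 := by omega
  rw [h1]
  exact (hs (n - (i + 1)) (by omega)).symm

lemma EditPath.comp {m n : ℕ} {u w v : List α} (h1 : EditPath m u w) (h2 : EditPath n w v) :
    EditPath (m + n) u v := by
  obtain ⟨f, f0, fm, fs⟩ := h1
  obtain ⟨g, g0, gn, gs⟩ := h2
  refine ⟨fun i => if i < m then f i else g (i - m), ?_, ?_, fun i hi => ?_⟩
  · show (if 0 < m then f 0 else g (0 - m)) = u
    rcases Nat.eq_zero_or_pos m with hm | hm
    · subst hm
      rw [if_neg (lt_irrefl 0)]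
      show g 0 = u
      rw [g0, ← fm, f0]
    · rw [if_pos hm, f0]
  · show (if m + n < m then f (m + n) else g (m + n - m)) = v
    rw [if_neg (by omega), Nat.add_sub_cancel_left, gn]
  · show EditStep (if i < m then f i else g (i - m)) (if i + 1 < m then f (i + 1) else g (i + 1 - m))
    rcases Nat.lt_or_ge (i + 1) m with h | h
    · rw [if_pos (by omega), if_pos h]
      exact fs i (by omega)
    · rw [if_neg (by omega : ¬ i + 1 < m)]
      rcases Nat.lt_or_ge i m with h' | h'
      · have he : i + 1 = m := by omega
        rw [if_pos h', he, Nat.sub_self, g0, ← fm, ← he]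
        exact fs i (by omega)
      · rw [if_neg (by omega : ¬ i < m), show i + 1 - m = (i - m) + 1 by omega]
        exact gs (i - m) (by omega)

lemma editStep_cons_del (a : α) (u : List α) : EditStep (a :: u) u :=
  Or.inr ⟨0, a, by simp⟩

lemma EditStep.cons {u v : List α} (a : α) (h : EditStep u v) : EditStep (a :: u) (a :: v) := by
  rcases h with ⟨i, c, rfl⟩ | ⟨i, c, h⟩
  · exact Or.inl ⟨i + 1, c, List.insertIdx_succ_cons.symm⟩
  · exact Or.inr ⟨i + 1, c, by rw [h, List.insertIdx_succ_cons]⟩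

lemma EditPath.cons {n : ℕ} {u v : List α} (a : α) (h : EditPath n u v) :
    EditPath n (a :: u) (a :: v) := by
  obtain ⟨f, f0, fn, fs⟩ := h
  exact ⟨fun i => a :: f i, by simp [f0], by simp [fn], fun i hi => (fs i hi).cons a⟩

lemma insertIdx_eq_take_cons_drop (a : α) :
    ∀ (i : ℕ) (l : List α), i ≤ l.length → l.insertIdx i a = l.take i ++ a :: l.drop i := by
  intro i
  induction i with
  | zero => intro l _; simp
  | succ i ih =>
    intro l hl
    cases l with
    | nil => simp at hl
    | cons hd tl =>
      rw [List.insertIdx_succ_cons, ih tl (by simpa using hl)]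
      simp

lemma sublist_insertIdx' (l : List α) (i : ℕ) (a : α) : l <+ l.insertIdx i a := by
  rcases le_or_gt i l.length with h | h
  · rw [insertIdx_eq_take_cons_drop a i l h]
    conv_lhs => rw [← List.take_append_drop i l]
    exact List.Sublist.append (List.Sublist.refl _) (List.sublist_cons_self a _)
  · rw [List.insertIdx_of_length_lt h]

lemma editPath_of_sublist {w u : List α} (h : w <+ u) :
    EditPath (u.length - w.length) u w := by
  induction h with
  | slnil => exact EditPath.zero []
  | @cons w' u' a h ih =>
    have hl : w'.length ≤ u'.length := h.length_le
    have he : (a :: u').length - w'.length = 1 + (u'.length - w'.length) := by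
      simp only [List.length_cons]; omega
    rw [he]
    refine EditPath.comp ?_ ih
    refine ⟨fun i => if i = 0 then a :: u' else u', by simp, by simp, fun i hi => ?_⟩
    interval_cases i
    simpa using editStep_cons_del a u'
  | @cons_cons w' u' a h ih =>
    have he : (a :: u').length - (a :: w').length = u'.length - w'.length := by simp
    rw [he]
    exact ih.cons a

lemma editPath_nonempty (u v : List α) : ∃ n, EditPath n u v :=
  ⟨_, (editPath_of_sublist (List.nil_sublist u)).comp
      (editPath_of_sublist (List.nil_sublist v)).symm⟩

lemma indel_le_of_sublist {w u v : List α} (hu : w <+ u) (hv : w <+ v) :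
    indel u v ≤ (u.length - w.length) + (v.length - w.length) :=
  Nat.sInf_le ((editPath_of_sublist hu).comp (editPath_of_sublist hv).symm)

lemma editPath_indel (u v : List α) : EditPath (indel u v) u v :=
  Nat.sInf_mem (editPath_nonempty u v)

lemma indel_le {n : ℕ} {u v : List α} (h : EditPath n u v) : indel u v ≤ n := Nat.sInf_le h

lemma exists_common_sublist {n : ℕ} {u v : List α} (h : EditPath n u v) :
    ∃ w, w <+ u ∧ w <+ v ∧ u.length + v.length ≤ n + 2 * w.length := by
  induction n generalizing u with
  | zero =>
    obtain ⟨f, f0, fn, _⟩ := h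
    have : u = v := by rw [← f0, fn]
    subst this
    exact ⟨u, List.Sublist.refl u, List.Sublist.refl u, by omega⟩
  | succ n ih =>
    obtain ⟨f, f0, fn, fs⟩ := h
    have hstep : EditStep u (f 1) := f0 ▸ fs 0 (by omega)
    have hrest : EditPath n (f 1) v :=
      ⟨fun i => f (i + 1), rfl, fn, fun i hi => fs (i + 1) (by omega)⟩
    obtain ⟨w, hw1, hwv, hlen⟩ := ih hrest
    rcases hstep with ⟨i, a, hins⟩ | ⟨i, a, hdel⟩
    · rcases le_or_gt i u.length with hi | hi
      · have hform : f 1 = u.take i ++ a :: u.drop i := by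
          rw [hins, insertIdx_eq_take_cons_drop a i u hi]
        rw [hform] at hw1
        obtain ⟨w₁, w₂, hw, hw₁, hw₂⟩ := List.sublist_append_iff.mp hw1
        have hlenf1 : (f 1).length = u.length + 1 := by
          rw [hform]; simp; omega
        have hwlen : w.length = w₁.length + w₂.length := by rw [hw]; simp
        rcases List.sublist_cons_iff.mp hw₂ with h2 | ⟨r, hr2, hr⟩
        · refine ⟨w, ?_, hwv, by omega⟩
          rw [hw]
          calc w₁ ++ w₂ <+ u.take i ++ u.drop i := List.Sublist.append hw₁ h2
            _ = u := List.take_append_drop i u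
        · refine ⟨w₁ ++ r, ?_, ?_, ?_⟩
          · calc w₁ ++ r <+ u.take i ++ u.drop i := List.Sublist.append hw₁ hr
              _ = u := List.take_append_drop i u
          · refine List.Sublist.trans ?_ hwv
            rw [hw, hr2]
            exact List.Sublist.append (List.Sublist.refl w₁) (List.sublist_cons_self a r)
          · have : w₂.length = r.length + 1 := by rw [hr2]; simp
            simp only [List.length_append]
            omega
      · have : f 1 = u := by rw [hins, List.insertIdx_of_length_lt hi]
        rw [this] at hw1 hlen
        exact ⟨w, hw1, hwv, by omega⟩
    · have hsub : f 1 <+ u := by rw [hdel]; exact sublist_insertIdx' _ _ _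
      have hlu : u.length ≤ (f 1).length + 1 := by
        rw [hdel]; exact List.length_insertIdx_le_succ
      exact ⟨w, hw1.trans hsub, hwv, by omega⟩

/-- KEY LEMMA -/
lemma indel_append_singleton (u v : List α) (a : α) :
    indel (u ++ [a]) (v ++ [a]) = indel u v := by
  apply Nat.le_antisymm
  · obtain ⟨w, hwu, hwv, hlen⟩ := exists_common_sublist (editPath_indel u v)
    have h1 : w ++ [a] <+ u ++ [a] := List.Sublist.append hwu (List.Sublist.refl _)
    have h2 : w ++ [a] <+ v ++ [a] := List.Sublist.append hwv (List.Sublist.refl _)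
    have := indel_le_of_sublist h1 h2
    have hwu' := hwu.length_le
    have hwv' := hwv.length_le
    simp only [List.length_append, List.length_singleton] at this
    omega
  · obtain ⟨w, hwu, hwv, hlen⟩ := exists_common_sublist (editPath_indel (u ++ [a]) (v ++ [a]))
    -- w.dropLast is a common sublist of u and v
    have key : ∀ z : List α, w <+ z ++ [a] → w.dropLast <+ z := by
      intro z hz
      obtain ⟨w₁, w₂, hw, hw₁, hw₂⟩ := List.sublist_append_iff.mp hz
      rcases List.sublist_cons_iff.mp hw₂ with h2 | ⟨r, hr2, hr⟩
      · -- w₂ <+ [] so w₂ = []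
        have : w₂ = [] := List.sublist_nil.mp h2
        subst this
        rw [hw, List.append_nil]
        exact (List.dropLast_sublist w₁).trans hw₁
      · have : r = [] := List.sublist_nil.mp hr
        subst this
        rw [hw, hr2]
        have : (w₁ ++ [a]).dropLast = w₁ := by simp
        rw [this]
        exact hw₁
    have hdu : w.dropLast <+ u := key u hwu
    have hdv : w.dropLast <+ v := key v hwv
    have hle := indel_le_of_sublist hdu hdv
    have h1 := hdu.length_le
    have h2 := hdv.length_le
    have h3 : w.length ≤ w.dropLast.length + 1 := by
      rcases w with _ | ⟨b, t⟩ <;> simp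
    simp only [List.length_append, List.length_singleton] at hlen
    omega

lemma indel_nil_nil : indel ([] : List α) [] = 0 :=
  Nat.le_zero.mp (indel_le (EditPath.zero []))


lemma hh_zero_zero (x y : List α) : hh x y 0 0 = 0 := by
  simp [hh, indel_nil_nil]

lemma hh_top (x y : List α) : hh x y x.length y.length = indel x y := by
  simp [hh]

lemma hh_arc2 {x y : List α} {i j : ℕ} (hi1 : 1 ≤ i) (hix : i ≤ x.length)
    (hj1 : 1 ≤ j) (hjy : j ≤ y.length) (hxy : x[i - 1]? = y[j - 1]?) :
    hh x y i j = hh x y (i - 1) (j - 1) := by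
  have hix' : i - 1 < x.length := by omega
  have hjy' : j - 1 < y.length := by omega
  have hx : x[i - 1]? = some x[i - 1] := List.getElem?_eq_getElem hix'
  have hy : y[j - 1]? = some x[i - 1] := by rw [← hxy, hx]
  have htx : x.take i = x.take (i - 1) ++ [x[i - 1]] := by
    conv_lhs => rw [show i = (i - 1) + 1 by omega]
    rw [List.take_succ, hx]
    rfl
  have hty : y.take j = y.take (j - 1) ++ [x[i - 1]] := by
    conv_lhs => rw [show j = (j - 1) + 1 by omega]
    rw [List.take_succ, hy]
    rfl
  rw [hh, htx, hty, indel_append_singleton]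
  rfl

lemma arc_rel {x y : List α} {p q : ℕ × ℕ} (h : IsArc x y p q) :
    (p.1 = q.1 + 1 ∧ p.2 = q.2 ∧ hh x y p.1 p.2 = hh x y q.1 q.2 + 1 ∧
      IsArc1 x y p q ∧ ¬IsArc2 x y p q ∧ ¬IsArc3 x y p q) ∨
    (p.1 = q.1 + 1 ∧ p.2 = q.2 + 1 ∧ hh x y p.1 p.2 = hh x y q.1 q.2 ∧
      ¬IsArc1 x y p q ∧ IsArc2 x y p q ∧ ¬IsArc3 x y p q) ∨
    (p.1 = q.1 ∧ p.2 = q.2 + 1 ∧ hh x y p.1 p.2 = hh x y q.1 q.2 + 1 ∧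
      ¬IsArc1 x y p q ∧ ¬IsArc2 x y p q ∧ IsArc3 x y p q) := by
  rcases h with h | h | h
  · left
    obtain ⟨h1, hx, hy, hq, hhh⟩ := h
    have hq1 : q.1 = p.1 - 1 := by rw [hq]
    have hq2 : q.2 = p.2 := by rw [hq]
    refine ⟨by omega, hq2.symm, by rw [hq1, hq2]; exact hhh, ⟨h1, hx, hy, hq, hhh⟩, ?_, ?_⟩
    · rintro ⟨_, _, hp2, _, hq', _⟩
      rw [hq] at hq'
      have := (Prod.mk.injEq _ _ _ _).mp hq'
      omega
    · rintro ⟨_, hp2, _, hq', _⟩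
      rw [hq] at hq'
      have := (Prod.mk.injEq _ _ _ _).mp hq'
      omega
  · right; left
    obtain ⟨h1, hx, h2, hy, hq, hxy⟩ := h
    have hq1 : q.1 = p.1 - 1 := by rw [hq]
    have hq2 : q.2 = p.2 - 1 := by rw [hq]
    refine ⟨by omega, by omega, ?_, ?_, ⟨h1, hx, h2, hy, hq, hxy⟩, ?_⟩
    · rw [hq1, hq2]; exact hh_arc2 h1 hx h2 hy hxy
    · rintro ⟨_, _, _, hq', _⟩
      rw [hq] at hq'
      have := (Prod.mk.injEq _ _ _ _).mp hq'
      omega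
    · rintro ⟨_, _, _, hq', _⟩
      rw [hq] at hq'
      have := (Prod.mk.injEq _ _ _ _).mp hq'
      omega
  · right; right
    obtain ⟨hx, h2, hy, hq, hhh⟩ := h
    have hq1 : q.1 = p.1 := by rw [hq]
    have hq2 : q.2 = p.2 - 1 := by rw [hq]
    refine ⟨hq1.symm, by omega, by rw [hq1, hq2]; exact hhh, ?_, ?_, ⟨hx, h2, hy, hq, hhh⟩⟩
    · rintro ⟨hp1, _, _, hq', _⟩
      rw [hq] at hq'
      have := (Prod.mk.injEq _ _ _ _).mp hq'
      omega
    · rintro ⟨hp1, _, _, _, hq', _⟩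
      rw [hq] at hq'
      have := (Prod.mk.injEq _ _ _ _).mp hq'
      omega

lemma countArc_cons_cons (A : ℕ × ℕ → ℕ × ℕ → Prop) (p p' : ℕ × ℕ) (rest : List (ℕ × ℕ)) :
    countArc A (p :: p' :: rest) = countArc A (p' :: rest) + (if A p p' then 1 else 0) := by
  simp [countArc, List.countP_cons]

lemma telescope (x y : List α) :
    ∀ (P : List (ℕ × ℕ)) (p q : ℕ × ℕ), P.Chain' (IsArc x y) →
      P.head? = some p → P.getLast? = some q →
      p.1 = q.1 + countArc (IsArc1 x y) P + countArc (IsArc2 x y) P ∧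
      p.2 = q.2 + countArc (IsArc2 x y) P + countArc (IsArc3 x y) P ∧
      hh x y p.1 p.2 = hh x y q.1 q.2 + countArc (IsArc1 x y) P + countArc (IsArc3 x y) P := by
  intro P
  induction P with
  | nil => intro p q _ h; simp at h
  | cons p' t ih =>
    intro p q hc hh' hl
    have hp : p = p' := by simpa using hh'.symm
    subst hp
    cases t with
    | nil =>
      have hq : q = p := by simpa using hl.symm
      subst hq
      simp [countArc]
    | cons p'' rest =>
      simp only [List.Chain', List.isChain_cons_cons] at hc
      obtain ⟨harc, hc'⟩ := hc
      have hl' : (p'' :: rest).getLast? = some q := by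
        rwa [List.getLast?_cons_cons] at hl
      obtain ⟨e1, e2, e3⟩ := ih p'' q hc' rfl hl'
      rw [countArc_cons_cons, countArc_cons_cons, countArc_cons_cons]
      rcases arc_rel harc with ⟨a1, a2, a3, b1, b2, b3⟩ | ⟨a1, a2, a3, b1, b2, b3⟩ |
        ⟨a1, a2, a3, b1, b2, b3⟩
      · rw [if_pos b1, if_neg b2, if_neg b3]
        exact ⟨by omega, by omega, by rw [a1, a2] at *; omega⟩
      · rw [if_neg b1, if_pos b2, if_neg b3]
        exact ⟨by omega, by omega, by rw [a1, a2] at *; omega⟩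
      · rw [if_neg b1, if_neg b2, if_pos b3]
        exact ⟨by omega, by omega, by rw [a1, a2] at *; omega⟩



/-- the exact numbers of type-1, type-2 and type-3 arcs of any path. -/
theorem count_each_type {α : Type*} (x y : List α) (P : List (ℕ × ℕ))
    (hP : IsPath x y P) :
    (2 * countArc (IsArc1 x y) P : ℤ) = indel x y + x.length - y.length ∧
    (2 * countArc (IsArc2 x y) P : ℤ) = -(indel x y : ℤ) + x.length + y.length ∧
    (2 * countArc (IsArc3 x y) P : ℤ) = (indel x y : ℤ) - x.length + y.length := by
  obtain ⟨hc, hhead, hlast⟩ := hP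
  obtain ⟨e1, e2, e3⟩ := telescope x y P (x.length, y.length) (0, 0) hc hhead hlast
  dsimp only at e1 e2 e3
  rw [hh_zero_zero, hh_top] at e3
  refine ⟨?_, ?_, ?_⟩ <;> omega
end

section
/- The monotonically increasing periodic sequence m ∈ Z_{t+1}^n defined by m_i = (i−1) mod (t+1) can uniquely detect t deletion indices: for any S, S' ⊆ [n] with |S| = |S'| = t, D_S(m) = D_{S'}(m) implies S = S'. -/
open Classical

variable {α : Type*}

section Aux

lemma sorted_lt_getElem_ge (l : List ℕ) (h : l.Pairwise (· < ·)) (c : ℕ)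
    (hc : ∀ x ∈ l, c ≤ x) : ∀ k (hk : k < l.length), c + k ≤ l[k] := by
  induction l generalizing c with
  | nil => intro k hk; simp at hk
  | cons a l ih =>
    rw [List.pairwise_cons] at h
    intro k hk
    cases k with
    | zero => simpa using hc a (by simp)
    | succ k =>
      have h1 := ih h.2 (a + 1) (fun x hx => h.1 x hx) k (by simpa using hk)
      have ha := hc a (by simp)
      simp only [List.getElem_cons_succ]
      omega

lemma filter_range_getElem_bounds (P : ℕ → Bool) (n t : ℕ)
    (hc : (List.range n).countP (fun i => !P i) ≤ t)
    (k : ℕ) (hk : k < ((List.range n).filter P).length) :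
    k ≤ ((List.range n).filter P)[k] ∧ ((List.range n).filter P)[k] ≤ k + t := by
  set l := (List.range n).filter P with hl
  have hsub : l.Sublist (List.range n) := List.filter_sublist
  have hsorted : l.Pairwise (· < ·) := List.Pairwise.sublist hsub List.pairwise_lt_range
  have hnd : l.Nodup := hsub.nodup List.nodup_range
  have hlow : k ≤ l[k] := by
    have := sorted_lt_getElem_ge l hsorted 0 (fun x _ => Nat.zero_le x) k hk
    omega
  refine ⟨hlow, ?_⟩
  have hmem : l[k] ∈ List.range n := hsub.mem (l.getElem_mem hk)
  have hkn : l[k] < n := List.mem_range.mp hmem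
  set m := l[k] + 1 with hm
  have hmn : m ≤ n := hkn
  have hsplit : List.range n = List.range m ++ List.map (fun x => m + x) (List.range (n - m)) := by
    rw [← List.range_add]; congr 1; omega
  have hfs : l = (List.range m).filter P ++ ((List.map (fun x => m + x) (List.range (n - m))).filter P) := by
    rw [hl, hsplit, List.filter_append]
  set L1 := ((List.range m).filter P).length with hL1
  have htake : l.take L1 = (List.range m).filter P := by
    rw [hfs]; exact List.take_left
  have hL1le : L1 ≤ k + 1 := by
    by_contra hcon
    push_neg at hcon
    have hlen : L1 ≤ l.length := by
      have h1 : (l.take L1).length = L1 := by rw [htake]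
      have h2 : (l.take L1).length = min L1 l.length := List.length_take
      omega
    have hk1 : k + 1 < l.length := lt_of_lt_of_le hcon hlen
    have hmem2 : l[k+1] ∈ l.take L1 := by
      have hlt' : k + 1 < (l.take L1).length := by
        rw [htake]; exact hcon
      have : (l.take L1)[k+1]'hlt' = l[k+1] := List.getElem_take
      rw [← this]; exact List.getElem_mem _
    rw [htake] at hmem2
    have hlt2 : l[k+1] < m := List.mem_range.mp (List.mem_of_mem_filter hmem2)
    have hlt : l[k] < l[k+1] := List.pairwise_iff_getElem.mp hsorted k (k+1) _ _ (by omega)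
    omega
  have hcount : (List.range m).countP P + (List.range m).countP (fun i => !P i) = m := by
    have h1 := List.length_eq_countP_add_countP P (l := List.range m)
    have h2 : (List.range m).length = m := List.length_range
    have h3 : (fun a => decide ¬P a = true) = (fun i => !P i) := funext fun a => by
      cases P a <;> simp
    rw [h3] at h1
    omega
  have hmono : (List.range m).countP (fun i => !P i) ≤ (List.range n).countP (fun i => !P i) :=
    List.Sublist.countP_le (List.range_sublist.mpr hmn)
  have hL1ge : m ≤ L1 + t := by
    have hc1 : L1 = (List.range m).countP P := List.countP_eq_length_filter.symm
    omega
  have hm' : m = l[k] + 1 := hm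
  show l[k] ≤ k + t
  omega

lemma eq_of_mod_close (t a b : ℕ) (h : a % (t+1) = b % (t+1)) (h1 : a ≤ b) (h2 : b ≤ a + t) :
    a = b := by
  obtain ⟨c, hc⟩ := (Nat.modEq_iff_dvd' h1).mp h
  cases c with
  | zero => omega
  | succ c =>
    have : t + 1 ≤ (t + 1) * (c + 1) := Nat.le_mul_of_pos_right _ (by omega)
    omega

lemma filter_range_eq_of_map_mod (P Q : ℕ → Bool) (n t : ℕ)
    (hP : (List.range n).countP (fun i => !P i) ≤ t)
    (hQ : (List.range n).countP (fun i => !Q i) ≤ t)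
    (h : ((List.range n).filter P).map (· % (t+1)) = ((List.range n).filter Q).map (· % (t+1))) :
    (List.range n).filter P = (List.range n).filter Q := by
  have hlen : ((List.range n).filter P).length = ((List.range n).filter Q).length := by
    have := congrArg List.length h
    simpa using this
  apply List.ext_getElem hlen
  intro k h1 h2
  have hmod : ((List.range n).filter P)[k] % (t+1) = ((List.range n).filter Q)[k] % (t+1) := by
    have := congrArg (fun L => L[k]?) h
    simp only [List.getElem?_map] at this
    rw [List.getElem?_eq_getElem h1, List.getElem?_eq_getElem h2] at this
    simpa using this
  obtain ⟨hPl, hPu⟩ := filter_range_getElem_bounds P n t hP k h1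
  obtain ⟨hQl, hQu⟩ := filter_range_getElem_bounds Q n t hQ k h2
  rcases le_total (((List.range n).filter P)[k]) (((List.range n).filter Q)[k]) with hle | hle
  · exact eq_of_mod_close t _ _ hmod hle (by omega)
  · exact (eq_of_mod_close t _ _ hmod.symm hle (by omega)).symm

lemma delF_map_range (f : ℕ → ℕ) (n : ℕ) (S : Finset ℕ) :
    delF ((List.range n).map f) S = ((List.range n).filter (fun i => decide (i+1 ∉ S))).map f := by
  unfold delF
  have h1 : ((List.range n).map f).length = n := by simp
  rw [h1]
  have h2 : (List.range n).zip ((List.range n).map f)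
      = (List.range n).map (fun i => (i, f i)) := by
    apply List.ext_getElem (by simp)
    intro i hi1 hi2
    simp [List.getElem_zip]
  rw [h2, List.filter_map, List.map_map]
  rfl

lemma countP_mem_le (n : ℕ) (S : Finset ℕ) :
    (List.range n).countP (fun i => decide (i+1 ∈ S)) ≤ S.card := by
  rw [List.countP_eq_length_filter]
  set L := (List.range n).filter (fun i => decide (i+1 ∈ S)) with hL
  have hnd : L.Nodup := List.filter_sublist.nodup List.nodup_range
  have hndm : (L.map (· + 1)).Nodup := hnd.map (fun a b hab => by omega)
  have hsub : (L.map (· + 1)).toFinset ⊆ S := by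
    intro x hx
    rw [List.mem_toFinset, List.mem_map] at hx
    obtain ⟨i, hi, rfl⟩ := hx
    have := (List.mem_filter.mp hi).2
    simpa using this
  calc L.length = (L.map (· + 1)).length := by simp
    _ = (L.map (· + 1)).toFinset.card := (List.toFinset_card_of_nodup hndm).symm
    _ ≤ S.card := Finset.card_le_card hsub

end Aux

/-- the monotonically increasing periodic sequence detects `t`
deletion indices. -/
theorem periodic_detects (n t : ℕ) :
    Detects ((List.range n).map (· % (t + 1))) t := by
  intro S S' hS hS' hcard hcard' hdel
  have hlen : ((List.range n).map (· % (t + 1))).length = n := by simp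
  rw [hlen] at hS hS'
  rw [delF_map_range, delF_map_range] at hdel
  have hb : ∀ T : Finset ℕ, (fun i => !decide (i+1 ∉ T)) = (fun i => decide (i+1 ∈ T)) :=
    fun T => funext fun i => by by_cases h : i + 1 ∈ T <;> simp [h]
  have key := filter_range_eq_of_map_mod (fun i => decide (i+1 ∉ S)) (fun i => decide (i+1 ∉ S')) n t
    (by rw [hb]; exact (countP_mem_le n S).trans (le_of_eq hcard))
    (by rw [hb]; exact (countP_mem_le n S').trans (le_of_eq hcard'))
    hdel
  ext a
  have main : ∀ T T' : Finset ℕ, T ⊆ Finset.Icc 1 n →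
      (List.range n).filter (fun i => decide (i+1 ∉ T)) =
        (List.range n).filter (fun i => decide (i+1 ∉ T')) → a ∈ T → a ∈ T' := by
    intro T T' hT hkey haT
    by_contra haT'
    have ha1 : 1 ≤ a ∧ a ≤ n := by
      have := hT haT; simpa using this
    have hsub : a - 1 + 1 = a := by omega
    have hmem : a - 1 ∈ (List.range n).filter (fun i => decide (i+1 ∉ T')) :=
      List.mem_filter.mpr ⟨List.mem_range.mpr (by omega), by rw [hsub]; simpa using haT'⟩
    rw [← hkey] at hmem
    have := (List.mem_filter.mp hmem).2
    rw [hsub] at this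
    simp at this
    exact this haT
  constructor
  · exact main S S' hS key
  · exact main S' S hS' key.symm
end
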